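/- As β → ∞, D₁(β) tends to ((1+ρ)^{B−2}(2ρ⁵+7ρ⁴+8ρ³+7ρ²+4ρ+1) − ρ^{B+1}(2ρ²+3ρ−1)) / (μρ(1+ρ)((1+ρ)^{B−1}(ρ²+ρ+1) − ρ^{B+1})), and D₂(β) tends to 2((3ρ⁷+14ρ⁶+24ρ⁵+21ρ⁴+18ρ³+12ρ²+5ρ+1)·(1+ρ)^{B−2} − (3ρ⁴+8ρ³+4ρ²−5ρ−1)·ρ^{B+1}) / (μ²ρ²(1+ρ)²((1+ρ)^{B−1}(ρ²+ρ+1) − ρ^{B+1})). Here (1+ρ)^{B−2} denotes the integer power, equal to 1/(1+ρ) when B = 1. -/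

import Mathlib

open Filter Topology

noncomputable def wAux (rho : ℝ) (B : ℕ) (b : ℝ) : ℝ :=
  (b * (1 + rho) / (rho * (1 + rho + b))) ^ (B - 1)

noncomputable def numAux1 (rho x v : ℝ) : ℝ :=
  rho * (1 - rho * (1 + rho) * x) *
      (rho * (1 + rho) ^ 4 * x ^ 3 + (1 + rho) ^ 3 * (2 * rho ^ 2 + 4 * rho + 1) * x ^ 2
        - (1 + rho) * (2 * rho ^ 4 + rho ^ 3 - 8 * rho ^ 2 - 6 * rho - 1) * x
        - rho * (2 * rho ^ 3 + 3 * rho ^ 2 - 3 * rho - 2))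
    + rho * (v * (1 + rho) - rho * ((1 + rho) * x + 1)) * ((1 + rho) * x + 1) *
      (2 * rho ^ 4 + 5 * rho ^ 3 + 4 * rho ^ 2 + 4 * rho + 1)
    + (v - rho ^ 2 * x * ((1 + rho) * x + 1) - rho * x * (1 - rho * (1 + rho) * x)) * (1 + rho) *
      ((1 + rho) * x + 1) * (2 * rho ^ 4 + 4 * rho ^ 3 + 3 * rho ^ 2 + 3 * rho + 1)

noncomputable def denAux1 (mu rho x v : ℝ) : ℝ :=
  mu * rho * (1 + rho) ^ 3 * ((1 + rho) * x + 1) *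
    (v * (rho ^ 2 + rho + 1) - rho ^ 2 * ((1 + rho) * x + 1) * (x + 1))

noncomputable def numAux2 (rho x v : ℝ) : ℝ :=
  2 * (rho * (1 - rho * (1 + rho) * x) *
      (rho ^ 2 * (1 + rho) ^ 5 * x ^ 4 + rho * (1 + rho) ^ 4 * (2 * rho ^ 2 + 4 * rho + 1) * x ^ 3
        + (1 + rho) ^ 3 * (3 * rho ^ 4 + 10 * rho ^ 3 + 12 * rho ^ 2 + 5 * rho + 1) * x ^ 2
        - (1 + rho) * (3 * rho ^ 6 + 5 * rho ^ 5 - 11 * rho ^ 4 - 33 * rho ^ 3 - 23 * rho ^ 2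
            - 7 * rho - 1) * x
        - rho * (3 * rho ^ 5 + 8 * rho ^ 4 - 18 * rho ^ 2 - 12 * rho - 2))
    + rho * (v * (1 + rho) - rho * ((1 + rho) * x + 1)) * ((1 + rho) * x + 1) *
      (3 * rho ^ 6 + 11 * rho ^ 5 + 15 * rho ^ 4 + 11 * rho ^ 3 + 11 * rho ^ 2 + 5 * rho + 1)
    + (v - rho ^ 2 * x * ((1 + rho) * x + 1) - rho * x * (1 - rho * (1 + rho) * x)) * (1 + rho) *
      ((1 + rho) * x + 1) * (3 * rho ^ 6 + 9 * rho ^ 5 + 10 * rho ^ 4 + 7 * rho ^ 3 + 7 * rho ^ 2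
        + 4 * rho + 1))

noncomputable def denAux2 (mu rho x v : ℝ) : ℝ :=
  mu ^ 2 * rho ^ 2 * (1 + rho) ^ 4 * ((1 + rho) * x + 1) *
    (v * (rho ^ 2 + rho + 1) - rho ^ 2 * ((1 + rho) * x + 1) * (x + 1))
set_option maxHeartbeats 8000000 in
theorem stmt_17 (rho mu : ℝ) (hrho : 0 < rho) (hmu : 0 < mu)
    (B : ℕ) (hB : 1 ≤ B)
    (pi1 theta1 theta2 psi4' psi5' psi5s psi6s D1 D2 : ℝ → ℝ)
    (hpi1 : ∀ b : ℝ, pi1 b =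
      rho * (b - rho * (1 + rho)) * (rho * (1 + rho + b)) ^ (B - 1)
        / (b ^ (B + 1) * (1 + rho) ^ (B - 1) * (rho ^ 2 + rho + 1)
          - rho ^ (B + 1) * (1 + rho + b) ^ B * (1 + b)))
    (htheta1 : ∀ b : ℝ, theta1 b =
      (b ^ (B + 1) * (1 + rho) ^ B - b * rho ^ B * (1 + rho + b) ^ B)
        / (rho ^ (B - 1) * (1 + rho + b) ^ (B - 1) * (b - rho * (1 + rho))))
    (htheta2 : ∀ b : ℝ, theta2 b =
      (b ^ (B + 1) * (1 + rho) ^ (B - 1) - rho ^ (B + 1) * (1 + rho + b) ^ B)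
        / (rho ^ B * (1 + rho + b) ^ (B - 1) * (b - rho * (1 + rho))))
    (hpsi4' : ∀ b : ℝ, psi4' b =
      b * (1 + rho + b) * (2 * rho ^ 4 + 5 * rho ^ 3 + 4 * rho ^ 2 + 4 * rho + 1))
    (hpsi5' : ∀ b : ℝ, psi5' b =
      b * (1 + rho) * (1 + rho + b) * (2 * rho ^ 4 + 4 * rho ^ 3 + 3 * rho ^ 2 + 3 * rho + 1))
    (hpsi5s : ∀ b : ℝ, psi5s b =
      b ^ 2 * (1 + rho + b) * (3 * rho ^ 6 + 11 * rho ^ 5 + 15 * rho ^ 4 + 11 * rho ^ 3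
        + 11 * rho ^ 2 + 5 * rho + 1))
    (hpsi6s : ∀ b : ℝ, psi6s b =
      b ^ 2 * (1 + rho) * (1 + rho + b) * (3 * rho ^ 6 + 9 * rho ^ 5 + 10 * rho ^ 4
        + 7 * rho ^ 3 + 7 * rho ^ 2 + 4 * rho + 1))
    (hD1 : ∀ b : ℝ, D1 b =
      pi1 b * ((rho * (1 + rho) ^ 4)
          + b * ((1 + rho) ^ 3 * (2 * rho ^ 2 + 4 * rho + 1))
          + b ^ 2 * (-((1 + rho) * (2 * rho ^ 4 + rho ^ 3 - 8 * rho ^ 2 - 6 * rho - 1)))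
          + b ^ 3 * (-(rho * (2 * rho ^ 3 + 3 * rho ^ 2 - 3 * rho - 2)))
          + theta1 b * psi4' b - (1 - theta2 b) * psi5' b)
        / (mu * rho * b * (1 + rho) ^ 3 * (1 + rho + b)))
    (hD2 : ∀ b : ℝ, D2 b =
      2 * pi1 b * ((rho ^ 2 * (1 + rho) ^ 5)
          + b * (rho * (1 + rho) ^ 4 * (2 * rho ^ 2 + 4 * rho + 1))
          + b ^ 2 * ((1 + rho) ^ 3 * (3 * rho ^ 4 + 10 * rho ^ 3 + 12 * rho ^ 2 + 5 * rho + 1))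
          + b ^ 3 * (-((1 + rho) * (3 * rho ^ 6 + 5 * rho ^ 5 - 11 * rho ^ 4 - 33 * rho ^ 3
            - 23 * rho ^ 2 - 7 * rho - 1)))
          + b ^ 4 * (-(rho * (3 * rho ^ 5 + 8 * rho ^ 4 - 18 * rho ^ 2 - 12 * rho - 2)))
          + theta1 b * psi5s b - (1 - theta2 b) * psi6s b)
        / (mu ^ 2 * rho ^ 2 * b ^ 2 * (1 + rho) ^ 4 * (1 + rho + b))) :
    Tendsto D1 atTop (𝓝
      (((1 + rho) ^ ((B : ℤ) - 2) * (2 * rho ^ 5 + 7 * rho ^ 4 + 8 * rho ^ 3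
          + 7 * rho ^ 2 + 4 * rho + 1)
        - rho ^ (B + 1) * (2 * rho ^ 2 + 3 * rho - 1))
      / (mu * rho * (1 + rho) * ((1 + rho) ^ (B - 1) * (rho ^ 2 + rho + 1)
        - rho ^ (B + 1))))) ∧
    Tendsto D2 atTop (𝓝
      (2 * ((3 * rho ^ 7 + 14 * rho ^ 6 + 24 * rho ^ 5 + 21 * rho ^ 4 + 18 * rho ^ 3
          + 12 * rho ^ 2 + 5 * rho + 1) * (1 + rho) ^ ((B : ℤ) - 2)
        - (3 * rho ^ 4 + 8 * rho ^ 3 + 4 * rho ^ 2 - 5 * rho - 1) * rho ^ (B + 1))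
      / (mu ^ 2 * rho ^ 2 * (1 + rho) ^ 2 * ((1 + rho) ^ (B - 1) * (rho ^ 2 + rho + 1)
        - rho ^ (B + 1))))) := by
  have h1r : (0:ℝ) < 1 + rho := by linarith
  have hrne : rho ≠ 0 := ne_of_gt hrho
  have h1rne : (1 + rho) ≠ 0 := ne_of_gt h1r
  have hmne : mu ≠ 0 := ne_of_gt hmu
  obtain ⟨W, hWdef⟩ : ∃ W : ℝ, W = ((1 + rho) / rho) ^ (B - 1) := ⟨_, rfl⟩
  have hsplit : ∀ y : ℝ, y ^ B = y ^ (B - 1) * y := by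
    intro y
    conv_lhs => rw [show B = (B - 1) + 1 from by omega]
    rw [pow_succ]
  have hsplit2 : ∀ y : ℝ, y ^ (B + 1) = y ^ (B - 1) * y ^ 2 := by
    intro y; rw [← pow_add]; congr 1; omega
  have hx : Tendsto (fun b : ℝ => 1 / b) atTop (𝓝 0) := by
    simpa [one_div] using tendsto_inv_atTop_zero
  have hbase : Tendsto (fun b : ℝ => b * (1 + rho) / (rho * (1 + rho + b))) atTop
      (𝓝 ((1 + rho) / rho)) := by
    have h1 : Tendsto (fun b : ℝ => (1 + rho) + b) atTop atTop :=
      tendsto_atTop_add_const_left _ _ tendsto_id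
    have h2 : Tendsto (fun b : ℝ => (1 + rho) / ((1 + rho) + b)) atTop (𝓝 0) :=
      tendsto_const_nhds.div_atTop h1
    have h3 : Tendsto (fun b : ℝ => (1 + rho) / rho * (1 - (1 + rho) / ((1 + rho) + b))) atTop
        (𝓝 ((1 + rho) / rho * (1 - 0))) := tendsto_const_nhds.mul (tendsto_const_nhds.sub h2)
    rw [sub_zero, mul_one] at h3
    refine h3.congr' ?_
    filter_upwards [eventually_gt_atTop 0] with b hb
    have hs : (0:ℝ) < 1 + rho + b := by linarith
    field_simp
    ring
  have hw : Tendsto (wAux rho B) atTop (𝓝 W) := by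
    have := hbase.pow (B - 1)
    rw [hWdef]
    exact this
  have hrpow : (0:ℝ) < rho ^ (B - 1) := pow_pos hrho _
  have hapow : (0:ℝ) < (1 + rho) ^ (B - 1) := pow_pos h1r _
  have hle : rho ^ (B - 1) ≤ (1 + rho) ^ (B - 1) := pow_le_pow_left₀ hrho.le (by linarith) _
  have hWeq : W = (1 + rho) ^ (B - 1) / rho ^ (B - 1) := by rw [hWdef, div_pow]
  have hW1 : (1:ℝ) ≤ W := by rw [hWeq]; exact (one_le_div hrpow).mpr hle
  have hWC : (0:ℝ) < W * (rho ^ 2 + rho + 1) - rho ^ 2 := by nlinarith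
  have hgt : Tendsto (fun b : ℝ => wAux rho B b * (rho ^ 2 + rho + 1)
      - rho ^ 2 * ((1 + rho) * (1 / b) + 1) * ((1 / b) + 1)) atTop
      (𝓝 (W * (rho ^ 2 + rho + 1) - rho ^ 2)) := by
    have h4 : Tendsto (fun b : ℝ => wAux rho B b * (rho ^ 2 + rho + 1)
        - rho ^ 2 * ((1 + rho) * (1 / b) + 1) * ((1 / b) + 1)) atTop
        (𝓝 (W * (rho ^ 2 + rho + 1) - rho ^ 2 * ((1 + rho) * 0 + 1) * (0 + 1))) :=
      (hw.mul tendsto_const_nhds).sub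
        ((tendsto_const_nhds.mul ((tendsto_const_nhds.mul hx).add tendsto_const_nhds)).mul
          (hx.add tendsto_const_nhds))
    simpa using h4
  have hgpos : ∀ᶠ b in atTop, 0 < wAux rho B b * (rho ^ 2 + rho + 1)
      - rho ^ 2 * ((1 + rho) * (1 / b) + 1) * ((1 / b) + 1) :=
    hgt.eventually (eventually_gt_nhds hWC)
  -- the eventual identities
  have hid : ∀ᶠ b in atTop,
      D1 b = numAux1 rho (1 / b) (wAux rho B b) / denAux1 mu rho (1 / b) (wAux rho B b) ∧
      D2 b = numAux2 rho (1 / b) (wAux rho B b) / denAux2 mu rho (1 / b) (wAux rho B b) := by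
    filter_upwards [eventually_gt_atTop (rho * (1 + rho)), eventually_gt_atTop 0, hgpos]
      with b hb1 hb0 hgb
    have hs : (0:ℝ) < 1 + rho + b := by linarith
    have hbne : b ≠ 0 := ne_of_gt hb0
    have hsne : (1 + rho + b) ≠ 0 := ne_of_gt hs
    have hbrne : b - rho * (1 + rho) ≠ 0 := ne_of_gt (sub_pos.mpr hb1)
    have hwb : wAux rho B b = (b * (1 + rho)) ^ (B - 1) / (rho * (1 + rho + b)) ^ (B - 1) := by
      rw [wAux, div_pow]
    have hvP : b ^ (B - 1) * (1 + rho) ^ (B - 1)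
        = wAux rho B b * (rho ^ (B - 1) * (1 + rho + b) ^ (B - 1)) := by
      rw [hwb, mul_pow, mul_pow, div_mul_cancel₀ _ (by positivity)]
    have hPne : rho ^ (B - 1) * (1 + rho + b) ^ (B - 1) ≠ 0 := by positivity
    have hD' : 0 < b ^ 2 * wAux rho B b * (rho ^ 2 + rho + 1)
        - rho ^ 2 * ((1 + rho + b) * (1 + b)) := by
      have e : b ^ 2 * (wAux rho B b * (rho ^ 2 + rho + 1)
          - rho ^ 2 * ((1 + rho) * (1 / b) + 1) * ((1 / b) + 1))
          = b ^ 2 * wAux rho B b * (rho ^ 2 + rho + 1)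
            - rho ^ 2 * ((1 + rho + b) * (1 + b)) := by
        field_simp
      rw [← e]
      exact mul_pos (pow_pos hb0 2) hgb
    have hpi1' : pi1 b = rho * (b - rho * (1 + rho))
        / (b ^ 2 * wAux rho B b * (rho ^ 2 + rho + 1)
            - rho ^ 2 * ((1 + rho + b) * (1 + b))) := by
      rw [hpi1 b, mul_pow, hsplit2 b, hsplit2 rho, hsplit (1 + rho + b)]
      have hdenL : b ^ (B - 1) * b ^ 2 * (1 + rho) ^ (B - 1) * (rho ^ 2 + rho + 1)
          - rho ^ (B - 1) * rho ^ 2 * ((1 + rho + b) ^ (B - 1) * (1 + rho + b)) * (1 + b)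
          = (rho ^ (B - 1) * (1 + rho + b) ^ (B - 1)) *
            (b ^ 2 * wAux rho B b * (rho ^ 2 + rho + 1)
              - rho ^ 2 * ((1 + rho + b) * (1 + b))) := by
        linear_combination (b ^ 2 * (rho ^ 2 + rho + 1)) * hvP
      rw [div_eq_div_iff (by rw [hdenL]; exact mul_ne_zero hPne hD'.ne') hD'.ne']
      linear_combination (-(rho * (b - rho * (1 + rho)) * b ^ 2 * (rho ^ 2 + rho + 1))) * hvP
    have hth1 : theta1 b = (b ^ 2 * wAux rho B b * (1 + rho) - b * rho * (1 + rho + b))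
        / (b - rho * (1 + rho)) := by
      rw [htheta1 b, hsplit2 b, hsplit (1 + rho), hsplit rho, hsplit (1 + rho + b)]
      rw [div_eq_div_iff (mul_ne_zero hPne hbrne) hbrne]
      linear_combination ((b - rho * (1 + rho)) * b ^ 2 * (1 + rho)) * hvP
    have hth2 : theta2 b = (b ^ 2 * wAux rho B b - rho ^ 2 * (1 + rho + b))
        / (rho * (b - rho * (1 + rho))) := by
      rw [htheta2 b, hsplit2 b, hsplit2 rho, hsplit (1 + rho + b), hsplit rho]
      rw [div_eq_div_iff (mul_ne_zero (mul_ne_zero (mul_ne_zero (pow_ne_zero _ hrne) hrne)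
        (pow_ne_zero _ hsne)) hbrne) (mul_ne_zero hrne hbrne)]
      linear_combination (rho * (b - rho * (1 + rho)) * b ^ 2) * hvP
    have hsxne : (1 + rho) * (1 / b) + 1 ≠ 0 := by positivity
    constructor
    · rw [hD1 b, hpi1', hth1, hth2, hpsi4' b, hpsi5' b]
      unfold numAux1 denAux1
      rw [div_eq_div_iff (by positivity) (by positivity)]
      field_simp
      rw [div_eq_iff (by convert hD'.ne' using 1; ring)]
      ring
    · rw [hD2 b, hpi1', hth1, hth2, hpsi5s b, hpsi6s b]
      unfold numAux2 denAux2
      rw [div_eq_div_iff (by positivity) (by positivity)]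
      set_option maxRecDepth 100000 in field_simp
      rw [div_eq_iff (by convert hD'.ne' using 1; ring)]
      ring
  -- limit machinery
  have hpair : Tendsto (fun b : ℝ => (1 / b, wAux rho B b)) atTop (𝓝 ((0:ℝ), W)) :=
    hx.prodMk_nhds hw
  have hden0 : denAux1 mu rho 0 W = mu * rho * (1 + rho) ^ 3 * (W * (rho ^ 2 + rho + 1) - rho ^ 2) := by
    unfold denAux1; ring
  have hden0' : denAux2 mu rho 0 W
      = mu ^ 2 * rho ^ 2 * (1 + rho) ^ 4 * (W * (rho ^ 2 + rho + 1) - rho ^ 2) := by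
    unfold denAux2; ring
  have hden0ne : denAux1 mu rho 0 W ≠ 0 := by
    rw [hden0]; exact (mul_pos (by positivity) hWC).ne'
  have hden0ne' : denAux2 mu rho 0 W ≠ 0 := by
    rw [hden0']; exact (mul_pos (by positivity) hWC).ne'
  have hcont1 : ContinuousAt (fun p : ℝ × ℝ => numAux1 rho p.1 p.2 / denAux1 mu rho p.1 p.2)
      ((0:ℝ), W) := by
    apply ContinuousAt.div
    · apply Continuous.continuousAt
      unfold numAux1; fun_prop
    · apply Continuous.continuousAt
      unfold denAux1; fun_prop
    · exact hden0ne
  have hcont2 : ContinuousAt (fun p : ℝ × ℝ => numAux2 rho p.1 p.2 / denAux2 mu rho p.1 p.2)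
      ((0:ℝ), W) := by
    apply ContinuousAt.div
    · apply Continuous.continuousAt
      unfold numAux2; fun_prop
    · apply Continuous.continuousAt
      unfold denAux2; fun_prop
    · exact hden0ne'
  have hlim1 : Tendsto (fun b : ℝ => numAux1 rho (1 / b) (wAux rho B b)
      / denAux1 mu rho (1 / b) (wAux rho B b)) atTop (𝓝 (numAux1 rho 0 W / denAux1 mu rho 0 W)) := by
    simpa [Function.comp_def] using hcont1.tendsto.comp hpair
  have hlim2 : Tendsto (fun b : ℝ => numAux2 rho (1 / b) (wAux rho B b)
      / denAux2 mu rho (1 / b) (wAux rho B b)) atTop (𝓝 (numAux2 rho 0 W / denAux2 mu rho 0 W)) := by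
    simpa [Function.comp_def] using hcont2.tendsto.comp hpair
  -- value of the limits
  have hz : (1 + rho) ^ ((B : ℤ) - 2) = (1 + rho) ^ (B - 1) / (1 + rho) := by
    rw [show (B : ℤ) - 2 = ((B - 1 : ℕ) : ℤ) - 1 from by omega, zpow_sub₀ h1rne,
      zpow_natCast, zpow_one]
  have hrB1 : rho ^ (B + 1) = rho ^ (B - 1) * rho ^ 2 := hsplit2 rho
  have hdpos : (0:ℝ) < (1 + rho) ^ (B - 1) * (rho ^ 2 + rho + 1) - rho ^ (B + 1) := by
    rw [hrB1]
    nlinarith [mul_nonneg (sub_nonneg.mpr hle) (show (0:ℝ) ≤ rho ^ 2 + rho + 1 by positivity),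
      mul_pos hrpow (show (0:ℝ) < rho + 1 by linarith)]
  have hval1 : numAux1 rho 0 W / denAux1 mu rho 0 W
      = ((1 + rho) ^ ((B : ℤ) - 2) * (2 * rho ^ 5 + 7 * rho ^ 4 + 8 * rho ^ 3
          + 7 * rho ^ 2 + 4 * rho + 1)
        - rho ^ (B + 1) * (2 * rho ^ 2 + 3 * rho - 1))
      / (mu * rho * (1 + rho) * ((1 + rho) ^ (B - 1) * (rho ^ 2 + rho + 1) - rho ^ (B + 1))) := by
    rw [div_eq_div_iff hden0ne (by positivity)]
    rw [hz, hrB1, hWeq]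
    unfold numAux1 denAux1
    field_simp
    ring
  have hval2 : numAux2 rho 0 W / denAux2 mu rho 0 W
      = 2 * ((3 * rho ^ 7 + 14 * rho ^ 6 + 24 * rho ^ 5 + 21 * rho ^ 4 + 18 * rho ^ 3
          + 12 * rho ^ 2 + 5 * rho + 1) * (1 + rho) ^ ((B : ℤ) - 2)
        - (3 * rho ^ 4 + 8 * rho ^ 3 + 4 * rho ^ 2 - 5 * rho - 1) * rho ^ (B + 1))
      / (mu ^ 2 * rho ^ 2 * (1 + rho) ^ 2 * ((1 + rho) ^ (B - 1) * (rho ^ 2 + rho + 1)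
        - rho ^ (B + 1))) := by
    rw [div_eq_div_iff hden0ne' (by positivity)]
    rw [hz, hrB1, hWeq]
    unfold numAux2 denAux2
    field_simp
    ring
  constructor
  · rw [← hval1]
    refine Tendsto.congr' ?_ hlim1
    filter_upwards [hid] with b hb
    exact hb.1.symm
  · rw [← hval2]
    refine Tendsto.congr' ?_ hlim2
    filter_upwards [hid] with b hb
    exact hb.2.symm
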